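/- Suppose σ_i ≥ 1 for all 1 ≤ i ≤ r. For each 1 ≤ s ≤ r let v_s ∈ ℤ^{r+2} be a vector of the following form: if σ_s = 1 + σ_1 + ⋯ + σ_{s−1}, then v_s = −e_s + e_{−1} + e_0 + e_1 + ⋯ + e_{s−1}; otherwise, v_s = −e_s + e_{s−1} + Σ_{i∈A_s} e_i for some subset A_s ⊆ {1, …, s−2} with Σ_{i∈A_s} σ_i = σ_s − σ_{s−1}. Then each v_s lies in L and {v_1, …, v_r} is a ℤ-module basis of L. -/

import Mathlib

open Finset

/-- The standard basis vector `e j` of `ℤ^{r+2}`, realised as a function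
`ℤ → ℤ` (only indices `-1, 0, 1, …, r` are used). -/
def stdE (j : ℤ) : ℤ → ℤ := fun i => if i = j then 1 else 0

/-- The vector `σ = e₀ + σ₁e₁ + ⋯ + σᵣeᵣ`. -/
def sigmaVec (r : ℤ) (σ : ℤ → ℤ) : ℤ → ℤ :=
  fun i => if i = 0 then 1 else if 1 ≤ i ∧ i ≤ r then σ i else 0

/-- The vector `ρ = e₋₁ − e₀`. -/
def rhoVec : ℤ → ℤ := fun i => stdE (-1) i - stdE 0 i

/-- The standard inner product on `ℤ^{r+2}` (coordinates `-1, 0, 1, …, r`). -/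
noncomputable def ip (r : ℤ) (x y : ℤ → ℤ) : ℤ := ∑ i ∈ Finset.Icc (-1) r, x i * y i

/-- The change-maker condition on `σ₁, …, σᵣ`:
`0 ≤ σ₁ ≤ 1` and `σ_{i−1} ≤ σ_i ≤ σ₁ + ⋯ + σ_{i−1} + 1` for `1 < i ≤ r`. -/
def ChangeMaker (r : ℤ) (σ : ℤ → ℤ) : Prop :=
  0 ≤ σ 1 ∧ σ 1 ≤ 1 ∧ ∀ i, 1 < i → i ≤ r →
    σ (i - 1) ≤ σ i ∧ σ i ≤ (∑ j ∈ Finset.Icc 1 (i - 1), σ j) + 1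

/-- Membership in the change-maker lattice
`L = {v ∈ ℤ^{r+2} : v·σ = v·ρ = 0}`. -/
def memCM (r : ℤ) (σ : ℤ → ℤ) (x : ℤ → ℤ) : Prop :=
  (∀ i, i ∉ Finset.Icc (-1) r → x i = 0) ∧
    ip r x (sigmaVec r σ) = 0 ∧ ip r x rhoVec = 0

/-- A vector `v ∈ L` is irreducible if there are no nonzero `x, y ∈ L` with
`v = x + y` and `x·y ≥ 0`. -/
def IrredCM (r : ℤ) (σ : ℤ → ℤ) (v : ℤ → ℤ) : Prop :=
  ¬ ∃ x y : ℤ → ℤ, memCM r σ x ∧ memCM r σ y ∧ x ≠ 0 ∧ y ≠ 0 ∧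
    v = x + y ∧ 0 ≤ ip r x y

/-- A subset `S` of `ℤ^{r+2}` is indecomposable if it is not an orthogonal
direct sum of two nonzero subgroups. -/
def IndecompCM (r : ℤ) (S : Set (ℤ → ℤ)) : Prop :=
  ¬ ∃ L1 L2 : AddSubgroup (ℤ → ℤ), (L1 : Set (ℤ → ℤ)) ⊆ S ∧
    (L2 : Set (ℤ → ℤ)) ⊆ S ∧ L1 ≠ ⊥ ∧ L2 ≠ ⊥ ∧ L1 ⊓ L2 = ⊥ ∧
    (∀ x ∈ S, ∃ a ∈ L1, ∃ b ∈ L2, x = a + b) ∧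
    (∀ x ∈ L1, ∀ y ∈ L2, ip r x y = 0)

lemma sum_stdE (B : Finset ℤ) (i : ℤ) : ∑ j ∈ B, stdE j i = if i ∈ B then 1 else 0 := by
  simp [stdE, Finset.sum_ite_eq]

lemma ip_add_mul (r : ℤ) (x y g : ℤ → ℤ) (a : ℤ) :
    ip r (fun i => x i + a * y i) g = ip r x g + a * ip r y g := by
  simp only [ip, Finset.mul_sum, ← Finset.sum_add_distrib]
  exact Finset.sum_congr rfl fun i _ => by ring

lemma ip_form (r s : ℤ) (hs : s ∈ Finset.Icc (-1) r) (B : Finset ℤ)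
    (hB : B ⊆ Finset.Icc (-1) r) (g : ℤ → ℤ) :
    ip r (fun i => -(stdE s i) + ∑ j ∈ B, stdE j i) g = -(g s) + ∑ i ∈ B, g i := by
  have h1 : ∀ i, (-(stdE s i) + ∑ j ∈ B, stdE j i) * g i
      = -(if i = s then g i else 0) + (if i ∈ B then g i else 0) := by
    intro i
    rw [sum_stdE]
    simp only [stdE]
    split_ifs <;> ring
  rw [ip, Finset.sum_congr rfl fun i _ => h1 i, Finset.sum_add_distrib]
  congr 1
  · rw [Finset.sum_neg_distrib, Finset.sum_ite_eq' (Finset.Icc (-1) r) s g, if_pos hs]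
  · rw [Finset.sum_ite_mem, Finset.inter_eq_right.mpr hB]

lemma sum_Icc_neg1 (t : ℤ) (ht : 0 ≤ t) (f : ℤ → ℤ) :
    ∑ i ∈ Finset.Icc (-1) t, f i = f (-1) + f 0 + ∑ i ∈ Finset.Icc 1 t, f i := by
  have h : Finset.Icc (-1) t = insert (-1) (insert 0 (Finset.Icc 1 t)) := by
    ext i; simp only [Finset.mem_Icc, Finset.mem_insert]; omega
  rw [h, Finset.sum_insert (by simp only [Finset.mem_insert, Finset.mem_Icc]; omega),
    Finset.sum_insert (by simp only [Finset.mem_Icc]; omega)]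
  ring


/-- **Standard bases are bases.**  Suppose `σᵢ ≥ 1` for all `1 ≤ i ≤ r`, and
for each `1 ≤ s ≤ r` let `v s` be a standard basis vector: if `σ_s` is tight
then `v s = −e_s + e₋₁ + e₀ + e₁ + ⋯ + e_{s−1}`, and otherwise
`v s = −e_s + e_{s−1} + ∑_{i ∈ A_s} e_i` for some `A_s ⊆ {1, …, s−2}` with
`∑_{i∈A_s} σᵢ = σ_s − σ_{s−1}`.  Then each `v s` lies in `L` and
`{v 1, …, v r}` is a `ℤ`-module basis of `L`. -/
theorem stmt9 (r : ℤ) (hr : 1 ≤ r) (σ : ℤ → ℤ) (hcm : ChangeMaker r σ)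
    (hpos : ∀ i, 1 ≤ i → i ≤ r → 1 ≤ σ i)
    (v : ℤ → (ℤ → ℤ))
    (hv : ∀ s, 1 ≤ s → s ≤ r →
      (σ s = 1 + ∑ j ∈ Finset.Icc 1 (s - 1), σ j ∧
          v s = fun i => -(stdE s i) + ∑ j ∈ Finset.Icc (-1) (s - 1), stdE j i) ∨
      (σ s ≠ 1 + ∑ j ∈ Finset.Icc 1 (s - 1), σ j ∧
          ∃ A ⊆ Finset.Icc (1 : ℤ) (s - 2), (∑ i ∈ A, σ i = σ s - σ (s - 1)) ∧
            v s = fun i => -(stdE s i) + stdE (s - 1) i + ∑ j ∈ A, stdE j i)) :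
    (∀ s, 1 ≤ s → s ≤ r → memCM r σ (v s)) ∧
    (∀ x, memCM r σ x →
      ∃ c : ℤ → ℤ, x = fun i => ∑ s ∈ Finset.Icc (1 : ℤ) r, c s * v s i) ∧
    (∀ c : ℤ → ℤ,
      (fun i => ∑ s ∈ Finset.Icc (1 : ℤ) r, c s * v s i) = (0 : ℤ → ℤ) →
        ∀ s, 1 ≤ s → s ≤ r → c s = 0) := by

  -- Step 1: a uniform description of v s
  have key : ∀ s, 1 ≤ s → s ≤ r → ∃ B : Finset ℤ,
      B ⊆ Finset.Icc (-1) (s - 1) ∧ (∑ i ∈ B, sigmaVec r σ i = σ s) ∧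
      (∑ i ∈ B, rhoVec i = 0) ∧
      v s = fun i => -(stdE s i) + ∑ j ∈ B, stdE j i := by
    intro s h1 h2
    rcases hv s h1 h2 with ⟨ht, hvs⟩ | ⟨hnt, A, hA, hAsum, hvs⟩
    · refine ⟨Finset.Icc (-1) (s - 1), subset_rfl, ?_, ?_, hvs⟩
      · rw [sum_Icc_neg1 (s - 1) (by omega)]
        have hσ0 : sigmaVec r σ (-1) = 0 := by norm_num [sigmaVec]
        have hσ1 : sigmaVec r σ 0 = 1 := by norm_num [sigmaVec]
        have hcong : ∑ i ∈ Finset.Icc (1 : ℤ) (s - 1), sigmaVec r σ i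
            = ∑ i ∈ Finset.Icc (1 : ℤ) (s - 1), σ i := by
          refine Finset.sum_congr rfl fun i hi => ?_
          simp only [Finset.mem_Icc] at hi
          simp only [sigmaVec]
          rw [if_neg (by omega), if_pos ⟨hi.1, by omega⟩]
        rw [hσ0, hσ1, hcong]
        omega
      · rw [sum_Icc_neg1 (s - 1) (by omega)]
        have : ∑ i ∈ Finset.Icc (1 : ℤ) (s - 1), rhoVec i = 0 := by
          refine Finset.sum_eq_zero fun i hi => ?_
          simp only [Finset.mem_Icc] at hi
          simp only [rhoVec, stdE]
          rw [if_neg (by omega), if_neg (by omega)]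
          ring
        rw [this]
        norm_num [rhoVec, stdE]
    · -- slack case; first s ≥ 2
      have hσ1 : σ 1 = 1 := le_antisymm hcm.2.1 (hpos 1 le_rfl hr)
      have hs2 : 2 ≤ s := by
        by_contra h
        have hs1 : s = 1 := by omega
        apply hnt
        rw [hs1, show (1 : ℤ) - 1 = 0 from rfl, Finset.Icc_eq_empty (by omega),
          Finset.sum_empty, hσ1]
        norm_num
      have hnotA : s - 1 ∉ A := fun h => by
        have := hA h; simp only [Finset.mem_Icc] at this; omega
      refine ⟨insert (s - 1) A, ?_, ?_, ?_, ?_⟩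
      · intro i hi
        simp only [Finset.mem_insert] at hi
        rcases hi with h | h
        · simp only [Finset.mem_Icc]; omega
        · have := hA h; simp only [Finset.mem_Icc] at this ⊢; omega
      · rw [Finset.sum_insert hnotA]
        have h3 : sigmaVec r σ (s - 1) = σ (s - 1) := by
          simp only [sigmaVec]
          rw [if_neg (by omega), if_pos ⟨by omega, by omega⟩]
        have hcong : ∑ i ∈ A, sigmaVec r σ i = ∑ i ∈ A, σ i := by
          refine Finset.sum_congr rfl fun i hi => ?_
          have := hA hi; simp only [Finset.mem_Icc] at this
          simp only [sigmaVec]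
          rw [if_neg (by omega), if_pos ⟨this.1, by omega⟩]
        rw [h3, hcong, hAsum]
        ring
      · refine Finset.sum_eq_zero fun i hi => ?_
        simp only [Finset.mem_insert] at hi
        have hi1 : 1 ≤ i := by
          rcases hi with h | h
          · omega
          · have := hA h; simp only [Finset.mem_Icc] at this; omega
        simp only [rhoVec, stdE]
        rw [if_neg (by omega), if_neg (by omega)]
        ring
      · rw [hvs]
        funext i
        rw [Finset.sum_insert hnotA]
        ring
  -- Step 2: basic coordinate facts
  have hvss : ∀ s, 1 ≤ s → s ≤ r → v s s = -1 := by
    intro s h1 h2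
    obtain ⟨B, hBsub, _, _, hveq⟩ := key s h1 h2
    have hnB : s ∉ B := fun h => by
      have := hBsub h; simp only [Finset.mem_Icc] at this; omega
    simp only [hveq]
    rw [sum_stdE, if_neg hnB]
    simp [stdE]
  have hvhigh : ∀ s, 1 ≤ s → s ≤ r → ∀ i, s < i → v s i = 0 := by
    intro s h1 h2 i hi
    obtain ⟨B, hBsub, _, _, hveq⟩ := key s h1 h2
    have hnB : i ∉ B := fun h => by
      have := hBsub h; simp only [Finset.mem_Icc] at this; omega
    simp only [hveq]
    rw [sum_stdE, if_neg hnB]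
    simp [stdE]
    omega
  have hvmem : ∀ s, 1 ≤ s → s ≤ r → memCM r σ (v s) := by
    intro s h1 h2
    obtain ⟨B, hBsub, hBσ, hBρ, hveq⟩ := key s h1 h2
    have hBsub' : B ⊆ Finset.Icc (-1) r :=
      hBsub.trans (Finset.Icc_subset_Icc_right (by omega))
    have hsmem : s ∈ Finset.Icc (-1) r := by simp only [Finset.mem_Icc]; omega
    refine ⟨?_, ?_, ?_⟩
    · intro i hi
      simp only [Finset.mem_Icc, not_and_or, not_le] at hi
      have hnB : i ∉ B := fun h => by
        have := hBsub h; simp only [Finset.mem_Icc] at this; omega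
      simp only [hveq]
      rw [sum_stdE, if_neg hnB]
      simp [stdE]
      omega
    · rw [hveq, ip_form r s hsmem B hBsub', hBσ]
      have : sigmaVec r σ s = σ s := by
        simp only [sigmaVec]
        rw [if_neg (by omega), if_pos ⟨h1, h2⟩]
      rw [this]
      ring
    · rw [hveq, ip_form r s hsmem B hBsub', hBρ]
      simp only [rhoVec, stdE]
      rw [if_neg (by omega), if_neg (by omega)]
      ring
  refine ⟨hvmem, ?_, ?_⟩
  · -- spanning
    have hclose : ∀ x a s, memCM r σ x → 1 ≤ s → s ≤ r →
        memCM r σ (fun i => x i + a * v s i) := by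
      intro x a s hx h1 h2
      have hv' := hvmem s h1 h2
      refine ⟨fun i hi => by show x i + a * v s i = 0; rw [hx.1 i hi, hv'.1 i hi]; ring,
        ?_, ?_⟩
      · rw [ip_add_mul, hx.2.1, hv'.2.1]; ring
      · rw [ip_add_mul, hx.2.2, hv'.2.2]; ring
    have span : ∀ n : ℕ, ∀ x, memCM r σ x → (∀ i, (n : ℤ) < i → i ≤ r → x i = 0) →
        ∃ c : ℤ → ℤ, x = fun i => ∑ s ∈ Finset.Icc (1 : ℤ) r, c s * v s i := by
      intro n
      induction n with
      | zero =>
        intro x hx hvan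
        have hsum0 : ∑ i ∈ Finset.Icc (1 : ℤ) r, x i * sigmaVec r σ i = 0 :=
          Finset.sum_eq_zero fun i hi => by
            simp only [Finset.mem_Icc] at hi
            rw [hvan i (by omega) hi.2]; ring
        have hsum1 : ∑ i ∈ Finset.Icc (1 : ℤ) r, x i * rhoVec i = 0 :=
          Finset.sum_eq_zero fun i hi => by
            simp only [Finset.mem_Icc] at hi
            rw [hvan i (by omega) hi.2]; ring
        have h0 := hx.2.1
        rw [ip, sum_Icc_neg1 r (by omega), hsum0] at h0
        have hσm : sigmaVec r σ (-1) = 0 := by norm_num [sigmaVec]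
        have hσ0 : sigmaVec r σ 0 = 1 := by norm_num [sigmaVec]
        rw [hσm, hσ0] at h0
        have hx0 : x 0 = 0 := by linarith [h0]
        have h1 := hx.2.2
        rw [ip, sum_Icc_neg1 r (by omega), hsum1] at h1
        have hρm : rhoVec (-1) = 1 := by norm_num [rhoVec, stdE]
        have hρ0 : rhoVec 0 = -1 := by norm_num [rhoVec, stdE]
        rw [hρm, hρ0] at h1
        have hxm : x (-1) = 0 := by linarith [h1]
        refine ⟨0, funext fun i => ?_⟩
        simp only [Pi.zero_apply, zero_mul, Finset.sum_const_zero]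
        by_cases hA : i = -1
        · rw [hA]; exact hxm
        by_cases hB : i = 0
        · rw [hB]; exact hx0
        by_cases hC : 1 ≤ i ∧ i ≤ r
        · exact hvan i (by omega) hC.2
        · exact hx.1 i (by simp only [Finset.mem_Icc]; omega)
      | succ n IH =>
        intro x hx hvan
        by_cases hn : r < (n : ℤ) + 1
        · exact IH x hx fun i hi1 hi2 => hvan i (by push_cast; omega) hi2
        · push_neg at hn
          set s : ℤ := (n : ℤ) + 1 with hs
          have hs1 : 1 ≤ s := by omega
          have hx' : memCM r σ (fun i => x i + x s * v s i) :=
            hclose x (x s) s hx hs1 hn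
          have hvan' : ∀ i, (n : ℤ) < i → i ≤ r → x i + x s * v s i = 0 := by
            intro i hi1 hi2
            by_cases he : i = s
            · rw [he, hvss s hs1 hn]; ring
            · rw [hvan i (by push_cast; omega) hi2, hvhigh s hs1 hn i (by omega)]
              ring
          obtain ⟨c', hc'⟩ := IH _ hx' hvan'
          refine ⟨fun t => c' t - (if t = s then x s else 0), funext fun i => ?_⟩
          have hsum : ∑ t ∈ Finset.Icc (1 : ℤ) r,
              (c' t - if t = s then x s else 0) * v t i
              = (∑ t ∈ Finset.Icc (1 : ℤ) r, c' t * v t i) - x s * v s i := by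
            have hterm : ∀ t ∈ Finset.Icc (1 : ℤ) r,
                (c' t - if t = s then x s else 0) * v t i
                = c' t * v t i - (if t = s then x s * v s i else 0) := by
              intro t _
              by_cases h : t = s
              · rw [h, if_pos rfl, if_pos rfl]; ring
              · rw [if_neg h, if_neg h]; ring
            rw [Finset.sum_congr rfl hterm, Finset.sum_sub_distrib,
              Finset.sum_ite_eq' (Finset.Icc (1 : ℤ) r) s (fun _ => x s * v s i),
              if_pos (by simp only [Finset.mem_Icc]; omega)]
          rw [hsum, ← congrFun hc' i]
          ring
    intro x hx
    refine span r.toNat x hx fun i hi1 hi2 => absurd hi2 (by omega)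
  · -- linear independence
    intro c hc
    have hpoint : ∀ i, ∑ s ∈ Finset.Icc (1 : ℤ) r, c s * v s i = 0 := fun i => by
      have := congrFun hc i
      simpa using this
    have main : ∀ n : ℕ, ∀ s, 1 ≤ s → s ≤ r → r - (n : ℤ) ≤ s → c s = 0 := by
      intro n
      induction n using Nat.strong_induction_on with
      | _ n IH =>
        intro s h1 h2 h3
        have hgt : ∀ t, s < t → t ≤ r → c t = 0 := fun t ht1 ht2 =>
          IH (r - t).toNat (by omega) t (by omega) ht2 (by omega)
        have h0 := hpoint s
        have heq : ∑ t ∈ Finset.Icc (1 : ℤ) r, c t * v t s = c s * v s s := by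
          refine Finset.sum_eq_single s (fun t ht hne => ?_)
            (fun habs => absurd (by simp only [Finset.mem_Icc]; omega) habs)
          simp only [Finset.mem_Icc] at ht
          rcases lt_or_gt_of_ne hne with h | h
          · rw [hvhigh t ht.1 ht.2 s h]; ring
          · rw [hgt t h ht.2]; ring
        rw [heq, hvss s h1 h2] at h0
        linarith [h0]
    exact fun s h1 h2 => main (r - s).toNat s h1 h2 (by omega)
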